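/- Let α ∈ (0,1), ρ' ∈ (0, (λ/γ)(1−α)/α), and let (e^{k+1})_{k≥1} be positive reals with ∑_{k≥1} e^{k+1} < ∞. Let (ũ^k, ṽ^k)_{k≥1} ⊂ ℝ^n × ℝ^m satisfy, for every k ≥ 1: ũ^{k+1} ∈ prox_{αγ‖·‖₀}((1−α)ũ^k + αDṽ^k); F(ũ^{k+1}, ṽ^{k+1}) − F(ũ^{k+1}, ṽ^k) ≤ (ρ'/2)‖ũ^{k+1} − ũ^k‖₂²; and ‖∇H(ṽ^{k+1}; ũ^{k+1})‖₂ ≤ e^{k+1}, where ∇H is the gradient of H in its first variable. Assume moreover that for any index set C ⊆ {1,…,n} such that supp(ũ^k) = C for all sufficiently large k, the operator 𝒯(u) := (1−α)T_C u + α T_C D S(Dᵀu) has at least one fixed point. Then (ũ^k, ṽ^k) converges to a pair (u*, v*) which is a local minimizer of F. -/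

import Mathlib

open Matrix Filter

noncomputable section

/-- Matrix–vector multiplication as a map between Euclidean spaces. -/
def mulVecE {n m : ℕ} (A : Matrix (Fin n) (Fin m) ℝ) (v : EuclideanSpace ℝ (Fin m)) :
    EuclideanSpace ℝ (Fin n) :=
  (EuclideanSpace.equiv (Fin n) ℝ).symm (A.mulVec ((EuclideanSpace.equiv (Fin m) ℝ) v))

/-- The `ℓ₀` "norm": the number of nonzero components, as a real number. -/
def l0 {n : ℕ} (u : EuclideanSpace ℝ (Fin n)) : ℝ := ({i : Fin n | u i ≠ 0}).ncard

/-- The support of a vector. -/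
def supp {n : ℕ} (u : EuclideanSpace ℝ (Fin n)) : Set (Fin n) := {i | u i ≠ 0}

/-- Membership `x ∈ prox_{t‖·‖₀}(y)`. -/
def InProxL0 {n : ℕ} (t : ℝ) (x y : EuclideanSpace ℝ (Fin n)) : Prop :=
  ∀ z : EuclideanSpace ℝ (Fin n),
    (1 / (2 * t)) * ‖x - y‖ ^ 2 + l0 x ≤ (1 / (2 * t)) * ‖z - y‖ ^ 2 + l0 z

/-- The objective `F(u,v) = ψ(Bv) + (λ/(2γ))‖u − Dv‖₂² + λ‖u‖₀`. -/
def Fobj {n m p : ℕ} (ψ : EuclideanSpace ℝ (Fin p) → ℝ) (B : Matrix (Fin p) (Fin m) ℝ)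
    (D : Matrix (Fin n) (Fin m) ℝ) (lam γ : ℝ) (u : EuclideanSpace ℝ (Fin n))
    (v : EuclideanSpace ℝ (Fin m)) : ℝ :=
  ψ (mulVecE B v) + (lam / (2 * γ)) * ‖u - mulVecE D v‖ ^ 2 + lam * l0 u

/-- `H(v; u) = (λ/(2γ))‖v − Dᵀu‖₂² + ψ(Bv)`. -/
def Hfun {n m p : ℕ} (ψ : EuclideanSpace ℝ (Fin p) → ℝ) (B : Matrix (Fin p) (Fin m) ℝ)
    (D : Matrix (Fin n) (Fin m) ℝ) (lam γ : ℝ) (v : EuclideanSpace ℝ (Fin m))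
    (u : EuclideanSpace ℝ (Fin n)) : ℝ :=
  (lam / (2 * γ)) * ‖v - mulVecE Dᵀ u‖ ^ 2 + ψ (mulVecE B v)

/-- The coordinate projection `T_C` onto an index set `C`. -/
def Tmat {n : ℕ} (C : Set (Fin n)) (u : EuclideanSpace ℝ (Fin n)) :
    EuclideanSpace ℝ (Fin n) :=
  (EuclideanSpace.equiv (Fin n) ℝ).symm (C.indicator (fun i => u i))

namespace Aux

lemma norm_sq_eq {n : ℕ} (x : EuclideanSpace ℝ (Fin n)) : ‖x‖ ^ 2 = ∑ i, (x i) ^ 2 := by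
  rw [EuclideanSpace.norm_eq, Real.sq_sqrt (by positivity)]
  simp [Real.norm_eq_abs, sq_abs]

lemma inner_eq {n : ℕ} (x y : EuclideanSpace ℝ (Fin n)) :
    (inner ℝ x y : ℝ) = ∑ i, x i * y i := by
  rw [PiLp.inner_apply]; simp [RCLike.inner_apply]
  exact Finset.sum_congr rfl fun i _ => mul_comm _ _

lemma mulVecE_apply {n m : ℕ} (A : Matrix (Fin n) (Fin m) ℝ) (v : EuclideanSpace ℝ (Fin m))
    (i : Fin n) : mulVecE A v i = ∑ j, A i j * v j := by
  simp [mulVecE, Matrix.mulVec, dotProduct, EuclideanSpace.equiv]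

lemma mulVecE_add {n m : ℕ} (A : Matrix (Fin n) (Fin m) ℝ) (x y : EuclideanSpace ℝ (Fin m)) :
    mulVecE A (x + y) = mulVecE A x + mulVecE A y := by
  ext i
  simp [mulVecE_apply, mul_add, Finset.sum_add_distrib]

lemma mulVecE_smul {n m : ℕ} (A : Matrix (Fin n) (Fin m) ℝ) (c : ℝ)
    (x : EuclideanSpace ℝ (Fin m)) : mulVecE A (c • x) = c • mulVecE A x := by
  ext i
  simp only [mulVecE_apply, PiLp.smul_apply, smul_eq_mul, Finset.mul_sum]
  exact Finset.sum_congr rfl fun j _ => by ring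

/-- `mulVecE` as a linear map. -/
def mulVecL {n m : ℕ} (A : Matrix (Fin n) (Fin m) ℝ) :
    EuclideanSpace ℝ (Fin m) →ₗ[ℝ] EuclideanSpace ℝ (Fin n) where
  toFun := mulVecE A
  map_add' := mulVecE_add A
  map_smul' := mulVecE_smul A

lemma mulVecE_sub {n m : ℕ} (A : Matrix (Fin n) (Fin m) ℝ) (x y : EuclideanSpace ℝ (Fin m)) :
    mulVecE A (x - y) = mulVecE A x - mulVecE A y :=
  map_sub (mulVecL A) x y

lemma inner_mulVecE {n m : ℕ} (A : Matrix (Fin n) (Fin m) ℝ) (x : EuclideanSpace ℝ (Fin m))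
    (y : EuclideanSpace ℝ (Fin n)) :
    (inner ℝ (mulVecE A x) y : ℝ) = inner ℝ x (mulVecE Aᵀ y) := by
  simp only [inner_eq, mulVecE_apply, Matrix.transpose_apply, Finset.sum_mul, Finset.mul_sum]
  rw [Finset.sum_comm]
  exact Finset.sum_congr rfl fun j _ => Finset.sum_congr rfl fun i _ => by ring

lemma mulVecE_mulVecE {n m k : ℕ} (A : Matrix (Fin n) (Fin m) ℝ) (Bm : Matrix (Fin m) (Fin k) ℝ)
    (x : EuclideanSpace ℝ (Fin k)) : mulVecE A (mulVecE Bm x) = mulVecE (A * Bm) x := by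
  ext i
  simp only [mulVecE_apply, Matrix.mul_apply, Finset.sum_mul, Finset.mul_sum]
  rw [Finset.sum_comm]
  congr 1; ext j; congr 1; ext l; ring

end Aux
namespace Aux

lemma Tmat_apply_mem {n : ℕ} {C : Set (Fin n)} (u : EuclideanSpace ℝ (Fin n)) {i : Fin n}
    (hi : i ∈ C) : Tmat C u i = u i := by
  simp only [Tmat, EuclideanSpace.equiv]
  exact Set.indicator_of_mem hi _

lemma Tmat_apply_nmem {n : ℕ} {C : Set (Fin n)} (u : EuclideanSpace ℝ (Fin n)) {i : Fin n}
    (hi : i ∉ C) : Tmat C u i = 0 := by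
  simp only [Tmat, EuclideanSpace.equiv]
  exact Set.indicator_of_notMem hi _

lemma Tmat_add {n : ℕ} (C : Set (Fin n)) (x y : EuclideanSpace ℝ (Fin n)) :
    Tmat C (x + y) = Tmat C x + Tmat C y := by
  ext i; by_cases hi : i ∈ C <;>
    simp [Tmat_apply_mem, Tmat_apply_nmem, hi]

lemma Tmat_smul {n : ℕ} (C : Set (Fin n)) (c : ℝ) (x : EuclideanSpace ℝ (Fin n)) :
    Tmat C (c • x) = c • Tmat C x := by
  ext i; by_cases hi : i ∈ C <;>
    simp [Tmat_apply_mem, Tmat_apply_nmem, hi]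

lemma Tmat_sub {n : ℕ} (C : Set (Fin n)) (x y : EuclideanSpace ℝ (Fin n)) :
    Tmat C (x - y) = Tmat C x - Tmat C y := by
  ext i; by_cases hi : i ∈ C <;>
    simp [Tmat_apply_mem, Tmat_apply_nmem, hi]

lemma norm_Tmat_sq_le {n : ℕ} (C : Set (Fin n)) (x : EuclideanSpace ℝ (Fin n)) :
    ‖Tmat C x‖ ^ 2 ≤ ‖x‖ ^ 2 := by
  rw [norm_sq_eq, norm_sq_eq]
  apply Finset.sum_le_sum
  intro i _
  by_cases hi : i ∈ C
  · rw [Tmat_apply_mem _ hi]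
  · rw [Tmat_apply_nmem _ hi]
    simpa using sq_nonneg (x i)

lemma norm_Tmat_le {n : ℕ} (C : Set (Fin n)) (x : EuclideanSpace ℝ (Fin n)) :
    ‖Tmat C x‖ ≤ ‖x‖ := by
  nlinarith [norm_Tmat_sq_le C x, norm_nonneg x, norm_nonneg (Tmat C x)]

lemma pythagoras_Tmat {n : ℕ} (C : Set (Fin n)) (x : EuclideanSpace ℝ (Fin n)) :
    ‖x‖ ^ 2 = ‖Tmat C x‖ ^ 2 + ‖x - Tmat C x‖ ^ 2 := by
  simp only [norm_sq_eq, PiLp.sub_apply]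
  rw [← Finset.sum_add_distrib]
  refine Finset.sum_congr rfl fun i _ => ?_
  by_cases hi : i ∈ C
  · rw [Tmat_apply_mem _ hi]; ring
  · rw [Tmat_apply_nmem _ hi]; ring

lemma norm_combo {E : Type*} [NormedAddCommGroup E] [InnerProductSpace ℝ E]
    (a b : ℝ) (hab : a + b = 1) (x y : E) :
    ‖a • x + b • y‖ ^ 2 = a * ‖x‖ ^ 2 + b * ‖y‖ ^ 2 - a * b * ‖x - y‖ ^ 2 := by
  have h1 : ‖a • x + b • y‖ ^ 2 = ‖a • x‖^2 + 2 * inner ℝ (a • x) (b • y) + ‖b • y‖^2 :=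
    norm_add_sq_real _ _
  have h2 : ‖x - y‖ ^ 2 = ‖x‖^2 - 2 * inner ℝ x y + ‖y‖^2 := norm_sub_sq_real x y
  rw [real_inner_smul_left, real_inner_smul_right, norm_smul, norm_smul] at h1
  simp only [mul_pow, Real.norm_eq_abs, sq_abs] at h1
  rw [h1, h2]
  linear_combination (a * ‖x‖^2 + b * ‖y‖^2) * hab

lemma strong_min {E : Type*} [NormedAddCommGroup E] [InnerProductSpace ℝ E]
    (f : E → ℝ) (hf : ConvexOn ℝ Set.univ f) (c : ℝ) (hc : 0 < c)
    (x s : E) (hmin : ∀ w, f s + c * ‖s - x‖ ^ 2 ≤ f w + c * ‖w - x‖ ^ 2) :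
    ∀ w, f s + c * ‖s - x‖ ^ 2 + c * ‖w - s‖ ^ 2 ≤ f w + c * ‖w - x‖ ^ 2 := by
  intro w
  set q : ℝ := ‖w - s‖ ^ 2 with hqdef
  have hq : 0 ≤ q := by rw [hqdef]; exact sq_nonneg _
  set M : ℝ := f w + c * ‖w - x‖ ^ 2 - (f s + c * ‖s - x‖ ^ 2) with hMdef
  have key : ∀ t : ℝ, 0 < t → t < 1 → c * (1 - t) * q ≤ M := by
    intro t ht0 ht1
    have hcomb : (1 - t) • s + t • w - x = (1 - t) • (s - x) + t • (w - x) := by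
      module
    have hsw' : (s - x) - (w - x) = s - w := by abel
    have hnorm : ‖(1 - t) • s + t • w - x‖ ^ 2
        = (1 - t) * ‖s - x‖ ^ 2 + t * ‖w - x‖ ^ 2 - (1 - t) * t * ‖s - w‖ ^ 2 := by
      rw [hcomb, norm_combo (1 - t) t (by ring), hsw']
    have hconv := hf.2 (Set.mem_univ s) (Set.mem_univ w) (by linarith : (0:ℝ) ≤ 1 - t)
      (le_of_lt ht0) (by ring : (1 - t) + t = 1)
    have hmin' := hmin ((1 - t) • s + t • w)
    have hsw : ‖s - w‖ ^ 2 = q := by rw [hqdef, ← norm_neg (s - w)]; congr 1; abel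
    rw [hnorm, hsw] at hmin'
    simp only [smul_eq_mul] at hconv
    have hthis : f s + c * ‖s - x‖ ^ 2 ≤ (1 - t) * f s + t * f w
        + c * ((1 - t) * ‖s - x‖ ^ 2 + t * ‖w - x‖ ^ 2 - (1 - t) * t * q) := by
      linarith [hmin', hconv]
    have h3 : t * (c * (1 - t) * q) ≤ t * M := by
      simp only [hMdef]; nlinarith [hthis]
    exact le_of_mul_le_mul_left h3 ht0
  by_contra hM
  push_neg at hM
  have hM' : M < c * q := by simp only [hMdef]; linarith
  have h2 := key (1/2) (by norm_num) (by norm_num)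
  have hM0 : 0 ≤ M := le_trans (by nlinarith) h2
  rcases eq_or_lt_of_le hq with hq0 | hqpos
  · nlinarith
  · set t₀ : ℝ := (c * q - M) / (2 * c * q) with ht₀
    have hcq : 0 < c * q := by positivity
    have ht₀0 : 0 < t₀ := div_pos (by linarith) (by linarith)
    have ht₀1 : t₀ < 1 := by
      rw [div_lt_one (by linarith)]; linarith
    have hk := key t₀ ht₀0 ht₀1
    rw [ht₀] at hk
    have hexp : c * (1 - (c * q - M) / (2 * c * q)) * q = c * q - (c * q - M)/2 := by
      field_simp
    rw [hexp] at hk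
    linarith

end Aux
namespace Aux

/-- Update one coordinate of a Euclidean vector. -/
def upd {n : ℕ} (x : EuclideanSpace ℝ (Fin n)) (i : Fin n) (a : ℝ) :
    EuclideanSpace ℝ (Fin n) :=
  (EuclideanSpace.equiv (Fin n) ℝ).symm
    (Function.update ((EuclideanSpace.equiv (Fin n) ℝ) x) i a)

lemma upd_apply {n : ℕ} (x : EuclideanSpace ℝ (Fin n)) (i : Fin n) (a : ℝ) (j : Fin n) :
    upd x i a j = if j = i then a else x j := by
  simp [upd, EuclideanSpace.equiv, Function.update_apply]

lemma l0_nonneg {n : ℕ} (x : EuclideanSpace ℝ (Fin n)) : 0 ≤ l0 x := by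
  simp [l0]

lemma norm_update_sub_sq {n : ℕ} (x y : EuclideanSpace ℝ (Fin n)) (i : Fin n) (a : ℝ) :
    ‖upd x i a - y‖ ^ 2 = ‖x - y‖ ^ 2 - (x i - y i) ^ 2 + (a - y i) ^ 2 := by
  rw [norm_sq_eq, norm_sq_eq]
  rw [← Finset.sum_erase_add _ _ (Finset.mem_univ i),
      ← Finset.sum_erase_add _ _ (Finset.mem_univ i)]
  have h1 : ∀ j ∈ Finset.univ.erase i,
      ((upd x i a - y) j) ^ 2 = ((x - y) j) ^ 2 := by
    intro j hj
    have hji : j ≠ i := Finset.ne_of_mem_erase hj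
    simp [PiLp.sub_apply, upd_apply, hji]
  rw [Finset.sum_congr rfl h1]
  have h2 : (upd x i a - y) i = a - y i := by
    simp [PiLp.sub_apply, upd_apply]
  rw [h2]
  simp only [PiLp.sub_apply]
  ring

lemma supp_finite {n : ℕ} (x : EuclideanSpace ℝ (Fin n)) : ({i | x i ≠ 0} : Set (Fin n)).Finite :=
  Set.toFinite _

lemma l0_update_zero {n : ℕ} (x : EuclideanSpace ℝ (Fin n)) {i : Fin n} (hxi : x i ≠ 0) :
    l0 (upd x i 0) = l0 x - 1 := by
  have hset : {j | upd x i 0 j ≠ 0} = {j | x j ≠ 0} \ {i} := by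
    ext j
    by_cases hji : j = i
    · subst hji; simp [upd_apply]
    · simp [upd_apply, hji]
  have hpos : 0 < ({j | x j ≠ 0} : Set (Fin n)).ncard :=
    (Set.ncard_pos (supp_finite x)).mpr ⟨i, hxi⟩
  rw [l0, hset, Set.ncard_diff_singleton_of_mem (show i ∈ {j | x j ≠ 0} from hxi)]
  rw [l0, Nat.cast_sub (by omega)]
  simp

lemma l0_update_keep {n : ℕ} (x : EuclideanSpace ℝ (Fin n)) {i : Fin n} (hxi : x i ≠ 0)
    {a : ℝ} (ha : a ≠ 0) :
    l0 (upd x i a) = l0 x := by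
  have hset : {j | upd x i a j ≠ 0} = {j | x j ≠ 0} := by
    ext j
    by_cases hji : j = i
    · subst hji; simp [upd_apply, ha, hxi]
    · simp [upd_apply, hji]
  rw [l0, hset, l0]

/-- Key facts about `prox` of `t‖·‖₀`: on the support, the solution agrees with the input
and the input is above the threshold `√(2t)`. -/
lemma prox_facts {n : ℕ} {t : ℝ} (ht : 0 < t) {x y : EuclideanSpace ℝ (Fin n)}
    (hp : InProxL0 t x y) {i : Fin n} (hxi : x i ≠ 0) :
    x i = y i ∧ 2 * t ≤ (y i) ^ 2 := by
  have h2t : 0 < 2 * t := by linarith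
  have hpos : 0 < 1/(2*t) := by positivity
  have hyi : y i ≠ 0 := by
    intro hyi0
    have h0 := hp (upd x i 0)
    rw [norm_update_sub_sq, l0_update_zero x hxi, hyi0] at h0
    nlinarith [sq_nonneg (x i), h0]
  have hxy : x i = y i := by
    have h1 := hp (upd x i (y i))
    rw [norm_update_sub_sq, l0_update_keep x hxi hyi] at h1
    have hle : (x i - y i) ^ 2 ≤ 0 := by nlinarith [h1]
    have := sq_eq_zero_iff.mp (le_antisymm hle (sq_nonneg _))
    linarith [sub_eq_zero.mp this]
  refine ⟨hxy, ?_⟩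
  have h0 := hp (upd x i 0)
  rw [norm_update_sub_sq, l0_update_zero x hxi] at h0
  have hx0 : (x i - y i) ^ 2 = 0 := by rw [hxy]; ring
  rw [hx0] at h0
  have h1 : 1 ≤ (1/(2*t)) * (y i)^2 := by nlinarith [h0]
  calc 2 * t = (2*t) * 1 := by ring
    _ ≤ (2*t) * ((1/(2*t)) * (y i)^2) := by nlinarith [h1]
    _ = (y i)^2 := by field_simp

lemma prox_threshold {n : ℕ} {t : ℝ} (ht : 0 < t) {x y : EuclideanSpace ℝ (Fin n)}
    (hp : InProxL0 t x y) {i : Fin n} (hxi : x i ≠ 0) :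
    Real.sqrt (2 * t) ≤ |x i| := by
  obtain ⟨hxy, hth⟩ := prox_facts ht hp hxi
  rw [hxy]
  calc Real.sqrt (2*t) ≤ Real.sqrt ((y i)^2) := Real.sqrt_le_sqrt hth
    _ = |y i| := Real.sqrt_sq_eq_abs _

end Aux
namespace Aux

lemma abs_coord_le_norm {n : ℕ} (x : EuclideanSpace ℝ (Fin n)) (i : Fin n) : |x i| ≤ ‖x‖ := by
  have h1 : (x i)^2 ≤ ‖x‖^2 := by
    rw [norm_sq_eq]
    exact Finset.single_le_sum (f := fun j => (x j)^2) (fun j _ => sq_nonneg _) (Finset.mem_univ i)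
  calc |x i| = Real.sqrt ((x i)^2) := (Real.sqrt_sq_eq_abs _).symm
    _ ≤ Real.sqrt (‖x‖^2) := Real.sqrt_le_sqrt h1
    _ = ‖x‖ := by rw [Real.sqrt_sq (norm_nonneg _)]

/-- One-step descent produced by the prox step. -/
lemma prox_descent {n m p : ℕ} (ψ : EuclideanSpace ℝ (Fin p) → ℝ)
    (B : Matrix (Fin p) (Fin m) ℝ) (D : Matrix (Fin n) (Fin m) ℝ)
    {lam γ α : ℝ} (hlam : 0 < lam) (hγ : 0 < γ) (hα0 : 0 < α) (hα1 : α < 1)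
    (uk u' : EuclideanSpace ℝ (Fin n)) (vk : EuclideanSpace ℝ (Fin m))
    (hp : InProxL0 (α * γ) u' ((1 - α) • uk + α • mulVecE D vk)) :
    Fobj ψ B D lam γ u' vk - Fobj ψ B D lam γ uk vk
      ≤ -((lam/(2*γ)) * ((1-α)/α)) * ‖u' - uk‖^2 := by
  set w := mulVecE D vk with hw
  set y := (1 - α) • uk + α • w with hy
  have hty : (0:ℝ) < α * γ := by positivity
  set d2 := ‖u' - uk‖^2 with hd2
  set ip : ℝ := inner ℝ (u' - uk) (uk - w) with hip
  set q := ‖uk - w‖^2 with hq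
  have huy : u' - y = (u' - uk) + α • (uk - w) := by rw [hy]; module
  have hky : uk - y = α • (uk - w) := by rw [hy]; module
  have hexp1 : ‖u' - y‖^2 = d2 + 2*α*ip + α^2 * q := by
    rw [huy, norm_add_sq_real, real_inner_smul_right, norm_smul, Real.norm_eq_abs,
      abs_of_pos hα0, mul_pow, hd2, hip, hq]
    ring
  have hexp2 : ‖uk - y‖^2 = α^2 * q := by
    rw [hky, norm_smul, Real.norm_eq_abs, abs_of_pos hα0, mul_pow, hq]
  have hstar := hp uk
  rw [hexp1, hexp2] at hstar
  have hfrac : 0 < 1/(2*(α*γ)) := by positivity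
  have key : d2 + 2*α*ip + 2*γ*α*(l0 u' - l0 uk) ≤ 0 := by
    have h := hstar
    have h2 : (1/(2*(α*γ))) * (d2 + 2*α*ip) ≤ l0 uk - l0 u' := by linarith
    have h3 := (mul_le_mul_iff_right₀ hty).mpr h2
    have hrw : α*γ * ((1/(2*(α*γ))) * (d2 + 2*α*ip)) = (d2 + 2*α*ip)/2 := by
      field_simp
    rw [hrw] at h3
    linarith
  have hud : u' - w = (u' - uk) + (uk - w) := by module
  have hexp3 : ‖u' - w‖^2 = d2 + 2*ip + q := by
    rw [hud, norm_add_sq_real, hd2, hip, hq]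
  have hgoal : Fobj ψ B D lam γ u' vk - Fobj ψ B D lam γ uk vk
      = (lam/(2*γ)) * (d2 + 2*ip) + lam * (l0 u' - l0 uk) := by
    simp only [Fobj, ← hw]
    rw [hexp3]
    ring
  rw [hgoal]
  have heq : (lam/(2*γ)) * (d2 + 2*ip) + lam * (l0 u' - l0 uk) + ((lam/(2*γ)) * ((1-α)/α)) * d2
      = (lam/(2*γ*α)) * (d2 + 2*α*ip + 2*γ*α*(l0 u' - l0 uk)) := by
    field_simp
    ring
  have hc : 0 < lam/(2*γ*α) := by positivity
  nlinarith [mul_nonpos_of_nonneg_of_nonpos hc.le key, heq]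

/-- Telescoping summability of step sizes. -/
lemma summable_of_descent {a d : ℕ → ℝ} {c L : ℝ} (hc : 0 < c)
    (hd : ∀ k, 0 ≤ d k) (hL : ∀ k, L ≤ a k)
    (hdrop : ∀ k, 1 ≤ k → a (k+1) + c * d k ≤ a k) :
    Summable (fun k => d (k+1)) := by
  have hpart : ∀ K : ℕ, ∑ i ∈ Finset.range K, c * d (i+1) ≤ a 1 - a (K+1) := by
    intro K
    induction K with
    | zero => simp
    | succ K ih =>
      rw [Finset.sum_range_succ]
      have := hdrop (K+1) (by omega)
      linarith
  have hsum : Summable (fun k => c * d (k+1)) := by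
    apply summable_of_sum_range_le (c := a 1 - L)
    · intro k; exact mul_nonneg hc.le (hd _)
    · intro K; linarith [hpart K, hL (K+1)]
  exact (summable_mul_left_iff hc.ne').mp hsum

lemma tendsto_sqrt_zero {d : ℕ → ℝ} (hd : ∀ k, 0 ≤ d k)
    (h : Tendsto (fun k => d k ^ 2) atTop (nhds 0)) : Tendsto d atTop (nhds 0) := by
  have h1 : Tendsto (fun k => Real.sqrt (d k ^ 2)) atTop (nhds (Real.sqrt 0)) :=
    (Real.continuous_sqrt.tendsto 0).comp h
  rw [Real.sqrt_zero] at h1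
  convert h1 using 2 with k
  rw [Real.sqrt_sq (hd k)]

/-- Support stabilization. -/
lemma supp_stab {n : ℕ} {u : ℕ → EuclideanSpace ℝ (Fin n)} {τ : ℝ} (hτ : 0 < τ)
    (hth : ∀ k, 2 ≤ k → ∀ i, u k i ≠ 0 → τ ≤ |u k i|)
    (hdiff : Tendsto (fun k => ‖u (k+1) - u k‖) atTop (nhds 0)) :
    ∃ N, 2 ≤ N ∧ ∀ k, N ≤ k → supp (u k) = supp (u N) := by
  obtain ⟨N₀, hN₀⟩ := (Metric.tendsto_atTop.mp hdiff τ hτ).imp (fun N h => h)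
  set N := max N₀ 2 with hN
  have hN2 : 2 ≤ N := le_max_right _ _
  have hstep : ∀ k, N ≤ k → supp (u (k+1)) = supp (u k) := by
    intro k hk
    have hsmall : ‖u (k+1) - u k‖ < τ := by
      have := hN₀ k (le_trans (le_max_left _ _) hk)
      rwa [Real.dist_eq, sub_zero, abs_of_nonneg (norm_nonneg _)] at this
    ext i
    simp only [supp, Set.mem_setOf_eq]
    constructor
    · intro h1
      by_contra h0
      have := hth (k+1) (by omega) i h1
      have hco : |u (k+1) i - u k i| ≤ ‖u (k+1) - u k‖ := by
        have := abs_coord_le_norm (u (k+1) - u k) i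
        simpa [PiLp.sub_apply] using this
      rw [h0] at hco
      simp only [sub_zero] at hco
      linarith
    · intro h1
      by_contra h0
      have := hth k (by omega) i h1
      have hco : |u (k+1) i - u k i| ≤ ‖u (k+1) - u k‖ := by
        have := abs_coord_le_norm (u (k+1) - u k) i
        simpa [PiLp.sub_apply] using this
      rw [h0] at hco
      simp only [zero_sub, abs_neg] at hco
      linarith
  refine ⟨N, hN2, ?_⟩
  intro k hk
  induction k with
  | zero => omega
  | succ k ih =>
    rcases Nat.lt_or_ge N (k+1) with h | h
    · have hk' : N ≤ k := by omega
      rw [hstep k hk', ih hk']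
    · have : N = k + 1 := by omega
      rw [this]

end Aux
namespace Aux

lemma inner_four {E : Type*} [NormedAddCommGroup E] [InnerProductSpace ℝ E]
    (s1 s2 x1 x2 : E) :
    ‖s2 - x1‖^2 + ‖s1 - x2‖^2 - ‖s1 - x1‖^2 - ‖s2 - x2‖^2
      = 2 * inner ℝ (s1 - s2) (x1 - x2) := by
  simp only [norm_sub_sq_real, inner_sub_left, inner_sub_right]
  ring_nf

lemma nonexp_of_strong {E : Type*} [NormedAddCommGroup E] [InnerProductSpace ℝ E]
    {S : E → E} {f : E → ℝ} {c : ℝ} (hc : 0 < c)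
    (hstrong : ∀ x w, f (S x) + c * ‖S x - x‖^2 + c * ‖w - S x‖^2 ≤ f w + c * ‖w - x‖^2) :
    ∀ x1 x2, ‖S x1 - S x2‖ ≤ ‖x1 - x2‖ := by
  intro x1 x2
  have h1 := hstrong x1 (S x2)
  have h2 := hstrong x2 (S x1)
  have hrev1 : ‖S x2 - S x1‖ = ‖S x1 - S x2‖ := norm_sub_rev _ _
  have hkey : 2 * c * ‖S x1 - S x2‖^2
      ≤ c * (‖S x2 - x1‖^2 + ‖S x1 - x2‖^2 - ‖S x1 - x1‖^2 - ‖S x2 - x2‖^2) := by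
    rw [hrev1] at h1
    nlinarith [h1, h2]
  rw [inner_four (S x1) (S x2) x1 x2] at hkey
  have hip : (inner ℝ (S x1 - S x2) (x1 - x2) : ℝ) ≤ ‖S x1 - S x2‖ * ‖x1 - x2‖ :=
    real_inner_le_norm _ _
  have h3 : ‖S x1 - S x2‖^2 ≤ ‖S x1 - S x2‖ * ‖x1 - x2‖ := by nlinarith
  rcases eq_or_lt_of_le (norm_nonneg (S x1 - S x2)) with h0 | h0
  · rw [← h0]; exact norm_nonneg _
  · nlinarith

lemma mulVecE_one {n : ℕ} (v : EuclideanSpace ℝ (Fin n)) : mulVecE 1 v = v := by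
  ext i
  simp [mulVecE_apply, Matrix.one_apply]

lemma D_isometry {n m : ℕ} {D : Matrix (Fin n) (Fin m) ℝ} (hD : Dᵀ * D = 1)
    (v : EuclideanSpace ℝ (Fin m)) : ‖mulVecE D v‖ = ‖v‖ := by
  have hsq : ‖mulVecE D v‖^2 = ‖v‖^2 := by
    rw [← real_inner_self_eq_norm_sq, ← real_inner_self_eq_norm_sq]
    rw [inner_mulVecE, mulVecE_mulVecE, hD, mulVecE_one]
  have h1 : ‖mulVecE D v‖ = Real.sqrt (‖mulVecE D v‖^2) := (Real.sqrt_sq (norm_nonneg _)).symm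
  rw [h1, hsq, Real.sqrt_sq (norm_nonneg _)]

lemma Dt_nonexp {n m : ℕ} {D : Matrix (Fin n) (Fin m) ℝ} (hD : Dᵀ * D = 1)
    (x : EuclideanSpace ℝ (Fin n)) : ‖mulVecE Dᵀ x‖ ≤ ‖x‖ := by
  have h1 : (inner ℝ (mulVecE D (mulVecE Dᵀ x)) x : ℝ) = ‖mulVecE Dᵀ x‖^2 := by
    rw [inner_mulVecE, real_inner_self_eq_norm_sq]
  have h2 : (inner ℝ (mulVecE D (mulVecE Dᵀ x)) x : ℝ) ≤ ‖mulVecE D (mulVecE Dᵀ x)‖ * ‖x‖ :=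
    real_inner_le_norm _ _
  rw [D_isometry hD] at h2
  rw [h1] at h2
  rcases eq_or_lt_of_le (norm_nonneg (mulVecE Dᵀ x)) with h0 | h0
  · rw [← h0]; exact norm_nonneg _
  · nlinarith

/-- The fixed-point operator `𝒯`. -/
def Tau {n m : ℕ} (C : Set (Fin n)) (D : Matrix (Fin n) (Fin m) ℝ)
    (S : EuclideanSpace ℝ (Fin m) → EuclideanSpace ℝ (Fin m)) (α : ℝ)
    (w : EuclideanSpace ℝ (Fin n)) : EuclideanSpace ℝ (Fin n) :=
  (1 - α) • Tmat C w + α • Tmat C (mulVecE D (S (mulVecE Dᵀ w)))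

lemma Tau_nonexp {n m : ℕ} {C : Set (Fin n)} {D : Matrix (Fin n) (Fin m) ℝ}
    {S : EuclideanSpace ℝ (Fin m) → EuclideanSpace ℝ (Fin m)} {α : ℝ}
    (hα0 : 0 < α) (hα1 : α < 1) (hD : Dᵀ * D = 1)
    (hSnon : ∀ x1 x2, ‖S x1 - S x2‖ ≤ ‖x1 - x2‖) (w1 w2 : EuclideanSpace ℝ (Fin n)) :
    ‖Tau C D S α w1 - Tau C D S α w2‖ ≤ ‖w1 - w2‖ := by
  set z1 := mulVecE D (S (mulVecE Dᵀ w1)) with hz1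
  set z2 := mulVecE D (S (mulVecE Dᵀ w2)) with hz2
  have hsplit : Tau C D S α w1 - Tau C D S α w2
      = (1-α) • (Tmat C w1 - Tmat C w2) + α • (Tmat C z1 - Tmat C z2) := by
    simp only [Tau, ← hz1, ← hz2]
    module
  rw [hsplit]
  calc ‖(1-α) • (Tmat C w1 - Tmat C w2) + α • (Tmat C z1 - Tmat C z2)‖
      ≤ ‖(1-α) • (Tmat C w1 - Tmat C w2)‖ + ‖α • (Tmat C z1 - Tmat C z2)‖ := norm_add_le _ _
    _ = (1-α) * ‖Tmat C w1 - Tmat C w2‖ + α * ‖Tmat C z1 - Tmat C z2‖ := by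
        rw [norm_smul, norm_smul, Real.norm_eq_abs, Real.norm_eq_abs,
          abs_of_pos (by linarith), abs_of_pos hα0]
    _ ≤ (1-α) * ‖w1 - w2‖ + α * ‖w1 - w2‖ := by
        have e1 : ‖Tmat C w1 - Tmat C w2‖ ≤ ‖w1 - w2‖ := by
          rw [← Tmat_sub]; exact norm_Tmat_le _ _
        have e2 : ‖Tmat C z1 - Tmat C z2‖ ≤ ‖w1 - w2‖ := by
          rw [← Tmat_sub]
          calc ‖Tmat C (z1 - z2)‖ ≤ ‖z1 - z2‖ := norm_Tmat_le _ _
            _ = ‖S (mulVecE Dᵀ w1) - S (mulVecE Dᵀ w2)‖ := by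
                rw [hz1, hz2, ← mulVecE_sub, D_isometry hD]
            _ ≤ ‖mulVecE Dᵀ w1 - mulVecE Dᵀ w2‖ := hSnon _ _
            _ = ‖mulVecE Dᵀ (w1 - w2)‖ := by rw [mulVecE_sub]
            _ ≤ ‖w1 - w2‖ := Dt_nonexp hD _
        have h1a : (0:ℝ) ≤ 1 - α := by linarith
        nlinarith [e1, e2]
    _ = ‖w1 - w2‖ := by ring

end Aux
namespace Aux

lemma grad_convex_ineq {E : Type*} [NormedAddCommGroup E] [InnerProductSpace ℝ E]
    [CompleteSpace E] {f : E → ℝ} (hf : ConvexOn ℝ Set.univ f) {x : E}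
    (hd : DifferentiableAt ℝ f x) (s : E) :
    f x - f s ≤ ‖gradient f x‖ * ‖x - s‖ := by
  set g := gradient f x with hgdef
  have hg : HasGradientAt f g x := hd.hasGradientAt
  have line : HasDerivAt (fun t : ℝ => x + t • (s - x)) (s - x) 0 := by
    simpa using ((hasDerivAt_id (0:ℝ)).smul_const (s - x)).const_add x
  have hline0 : x + (0:ℝ) • (s - x) = x := by simp
  have hgd : HasFDerivAt f ((InnerProductSpace.toDual ℝ E) g) ((fun t : ℝ => x + t • (s - x)) 0) := by
    simpa using hg.hasFDerivAt
  have hφ : HasDerivAt (fun t : ℝ => f (x + t • (s - x))) (inner ℝ g (s - x) : ℝ) 0 := by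
    exact hgd.comp_hasDerivAt 0 line
  have hslope := hasDerivAt_iff_tendsto_slope.mp hφ
  have hmono : nhdsWithin (0:ℝ) (Set.Ioi 0) ≤ nhdsWithin (0:ℝ) {(0:ℝ)}ᶜ :=
    nhdsWithin_mono _ (fun t ht => by simpa using (ne_of_gt ht))
  have hslope' := hslope.mono_left hmono
  have hbound : ∀ᶠ t in nhdsWithin (0:ℝ) (Set.Ioi 0),
      slope (fun t : ℝ => f (x + t • (s - x))) 0 t ≤ f s - f x := by
    filter_upwards [Ioo_mem_nhdsGT_of_mem (by constructor <;> norm_num :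
      (0:ℝ) ∈ Set.Ico (0:ℝ) 1)] with t ht
    have ht0 : 0 < t := ht.1
    have ht1 : t < 1 := ht.2
    have hcomb : x + t • (s - x) = (1 - t) • x + t • s := by module
    have hcv := hf.2 (Set.mem_univ x) (Set.mem_univ s) (by linarith : (0:ℝ) ≤ 1 - t)
      ht0.le (by ring : (1 - t) + t = 1)
    simp only [smul_eq_mul] at hcv
    rw [slope_def_field]
    simp only [sub_zero, zero_smul, add_zero]
    rw [div_le_iff₀ ht0]
    have h5 : f (x + t • (s - x)) ≤ (1 - t) * f x + t * f s := by rw [hcomb]; exact hcv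
    nlinarith [h5]
  have hle : (inner ℝ g (s - x) : ℝ) ≤ f s - f x :=
    le_of_tendsto hslope' hbound
  have h2 : f x - f s ≤ (inner ℝ g (x - s) : ℝ) := by
    have : (inner ℝ g (x - s) : ℝ) = -(inner ℝ g (s - x) : ℝ) := by
      rw [← inner_neg_right]; congr 1; abel
    rw [this]; linarith
  calc f x - f s ≤ (inner ℝ g (x - s) : ℝ) := h2
    _ ≤ ‖g‖ * ‖x - s‖ := real_inner_le_norm _ _

lemma convexOn_quad_add {E : Type*} [NormedAddCommGroup E] [InnerProductSpace ℝ E]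
    {f : E → ℝ} (hf : ConvexOn ℝ Set.univ f) {c : ℝ} (hc : 0 ≤ c) (a : E) :
    ConvexOn ℝ Set.univ (fun w => c * ‖w - a‖ ^ 2 + f w) := by
  refine ⟨convex_univ, ?_⟩
  intro x _ y _ s t hs ht hst
  have hcomb : s • x + t • y - a = s • (x - a) + t • (y - a) := by
    have h : s • (x - a) + t • (y - a) = s • x + t • y - (s + t) • a := by module
    rw [hst, one_smul] at h
    rw [h]
  have hn : ‖(s • x + t • y) - a‖ ^ 2 ≤ s * ‖x - a‖ ^ 2 + t * ‖y - a‖ ^ 2 := by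
    rw [hcomb, norm_combo s t hst]
    nlinarith [sq_nonneg ‖(x - a) - (y - a)‖, mul_nonneg hs ht, sq_nonneg (‖(x-a)-(y-a)‖)]
  have hf' := hf.2 (Set.mem_univ x) (Set.mem_univ y) hs ht hst
  simp only [smul_eq_mul] at hf' ⊢
  nlinarith [hn, hf', mul_nonneg hs ht]

lemma psiB_convex {m p : ℕ} {ψ : EuclideanSpace ℝ (Fin p) → ℝ}
    (hconv : ConvexOn ℝ Set.univ ψ) (B : Matrix (Fin p) (Fin m) ℝ) :
    ConvexOn ℝ Set.univ (fun v => ψ (mulVecE B v)) := by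
  have := hconv.comp_linearMap (mulVecL B)
  exact this

lemma psiB_diff {m p : ℕ} {ψ : EuclideanSpace ℝ (Fin p) → ℝ}
    (hdiff : ContDiff ℝ 1 ψ) (B : Matrix (Fin p) (Fin m) ℝ) :
    Differentiable ℝ (fun v => ψ (mulVecE B v)) := by
  have h1 : Differentiable ℝ (mulVecE B (m := m)) := by
    have := (mulVecL B).toContinuousLinearMap.differentiable
    exact this
  exact (hdiff.differentiable one_ne_zero).comp h1

lemma Hv_diff {n m p : ℕ} {ψ : EuclideanSpace ℝ (Fin p) → ℝ}
    (hdiff : ContDiff ℝ 1 ψ) (B : Matrix (Fin p) (Fin m) ℝ) (D : Matrix (Fin n) (Fin m) ℝ)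
    (lam γ : ℝ) (u' : EuclideanSpace ℝ (Fin n)) :
    Differentiable ℝ (fun w => Hfun ψ B D lam γ w u') := by
  have h1 : Differentiable ℝ (fun w : EuclideanSpace ℝ (Fin m) => ‖w - mulVecE Dᵀ u'‖ ^ 2) :=
    ((contDiff_norm_sq ℝ (n := 1)).differentiable one_ne_zero).comp
      (differentiable_id.sub_const _)
  exact ((h1.const_mul _).add (psiB_diff hdiff B))

/-- Error bound from the gradient of `H`. -/
lemma v_error {n m p : ℕ} {ψ : EuclideanSpace ℝ (Fin p) → ℝ}
    (hconv : ConvexOn ℝ Set.univ ψ) (hdiff : ContDiff ℝ 1 ψ)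
    (B : Matrix (Fin p) (Fin m) ℝ) (D : Matrix (Fin n) (Fin m) ℝ)
    {lam γ : ℝ} (hlam : 0 < lam) (hγ : 0 < γ)
    (S : EuclideanSpace ℝ (Fin m) → EuclideanSpace ℝ (Fin m))
    (hS : ∀ x v, ψ (mulVecE B (S x)) + (lam / (2 * γ)) * ‖S x - x‖ ^ 2 ≤
      ψ (mulVecE B v) + (lam / (2 * γ)) * ‖v - x‖ ^ 2)
    (u' : EuclideanSpace ℝ (Fin n)) (v' : EuclideanSpace ℝ (Fin m)) :
    (lam / (2 * γ)) * ‖v' - S (mulVecE Dᵀ u')‖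
      ≤ ‖gradient (fun w => Hfun ψ B D lam γ w u') v'‖ := by
  set c := lam / (2 * γ) with hc
  have hcpos : 0 < c := by rw [hc]; positivity
  set a := mulVecE Dᵀ u' with ha
  set s := S a with hs
  set Hv := fun w => Hfun ψ B D lam γ w u' with hHv
  have hHconv : ConvexOn ℝ Set.univ Hv :=
    convexOn_quad_add (psiB_convex hconv B) hcpos.le a
  have hHd : DifferentiableAt ℝ Hv v' := (Hv_diff hdiff B D lam γ u') v'
  have hstrong := strong_min (fun w => ψ (mulVecE B w)) (psiB_convex hconv B) c hcpos a s
    (fun w => hS a w) v'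
  have hHineq : Hv s + c * ‖v' - s‖ ^ 2 ≤ Hv v' := by
    simp only [hHv, Hfun, ← ha]
    have h := hstrong
    linarith [h]
  have hgrad := grad_convex_ineq hHconv hHd s
  have hkey : c * ‖v' - s‖ ^ 2 ≤ ‖gradient Hv v'‖ * ‖v' - s‖ := by linarith
  rcases eq_or_lt_of_le (norm_nonneg (v' - s)) with h0 | h0
  · rw [← h0, mul_zero]; exact norm_nonneg _
  · have := (mul_le_mul_iff_left₀ h0).mpr (le_refl c)
    nlinarith [hkey]

end Aux
namespace Aux

lemma quasi_fejer {n : ℕ} {u : ℕ → EuclideanSpace ℝ (Fin n)}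
    {T : EuclideanSpace ℝ (Fin n) → EuclideanSpace ℝ (Fin n)}
    (hT : ∀ a b, ‖T a - T b‖ ≤ ‖a - b‖) {w : EuclideanSpace ℝ (Fin n)} (hw : T w = w)
    {δ : ℕ → ℝ} (hδ : ∀ k, 0 ≤ δ k) (hδs : Summable δ) {N : ℕ}
    (hstep : ∀ k, N ≤ k → ‖u (k+1) - T (u k)‖ ≤ δ k)
    (hdiff : Tendsto (fun k => ‖u (k+1) - u k‖) atTop (nhds 0)) :
    ∃ us, T us = us ∧ Tendsto u atTop (nhds us) := by
  have hTcont : Continuous T := by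
    have : LipschitzWith 1 T := LipschitzWith.of_dist_le_mul (by
      intro a b; rw [dist_eq_norm, dist_eq_norm]; simpa using hT a b)
    exact this.continuous
  -- quasi-Fejér inequality
  have hfej : ∀ z : EuclideanSpace ℝ (Fin n), T z = z → ∀ k, N ≤ k → ∀ l, k ≤ l →
      ‖u l - z‖ ≤ ‖u k - z‖ + ∑ i ∈ Finset.Ico k l, δ i := by
    intro z hz k hk l hl
    induction l, hl using Nat.le_induction with
    | base => simp
    | succ l hl ih =>
      have hIco : ∑ i ∈ Finset.Ico k (l+1), δ i = (∑ i ∈ Finset.Ico k l, δ i) + δ l :=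
        Finset.sum_Ico_succ_top hl _
      have h1 : ‖u (l+1) - z‖ ≤ ‖u (l+1) - T (u l)‖ + ‖T (u l) - z‖ := by
        have := norm_add_le (u (l+1) - T (u l)) (T (u l) - z)
        simpa using this
      have h2 : ‖T (u l) - z‖ ≤ ‖u l - z‖ := by
        calc ‖T (u l) - z‖ = ‖T (u l) - T z‖ := by rw [hz]
          _ ≤ ‖u l - z‖ := hT _ _
      have h3 := hstep l (le_trans hk hl)
      rw [hIco]
      linarith
  -- boundedness and a convergent subsequence
  set R := ‖u N - w‖ + ∑' i, δ i with hR
  have htail : ∀ k l : ℕ, (∑ i ∈ Finset.Ico k l, δ i) ≤ ∑' i, δ i := by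
    intro k l
    apply Summable.sum_le_tsum
    · intro i _; exact hδ i
    · exact hδs
  have hbdd : ∀ j : ℕ, u (N + j) ∈ Metric.closedBall w R := by
    intro j
    rw [Metric.mem_closedBall, dist_eq_norm]
    calc ‖u (N + j) - w‖ ≤ ‖u N - w‖ + ∑ i ∈ Finset.Ico N (N + j), δ i :=
          hfej w hw N le_rfl (N + j) (by omega)
      _ ≤ R := by rw [hR]; linarith [htail N (N + j)]
  obtain ⟨a, _, φ, hφmono, hφconv⟩ :=
    tendsto_subseq_of_bounded Metric.isBounded_closedBall hbdd
  -- δ tends to zero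
  have hδ0 : Tendsto δ atTop (nhds 0) := hδs.tendsto_atTop_zero
  -- limit is a fixed point
  have hφat : Tendsto (fun j => N + φ j) atTop atTop :=
    tendsto_atTop_mono (fun j => le_trans (hφmono.id_le j) (by omega)) tendsto_id
  have hfix : T a = a := by
    have h1 : Tendsto (fun j => T (u (N + φ j)) - u (N + φ j)) atTop (nhds (T a - a)) :=
      ((hTcont.tendsto a).comp hφconv).sub hφconv
    have hb : ∀ k, N ≤ k → ‖T (u k) - u k‖ ≤ δ k + ‖u (k+1) - u k‖ := by
      intro k hk
      calc ‖T (u k) - u k‖ ≤ ‖T (u k) - u (k+1)‖ + ‖u (k+1) - u k‖ := by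
            have := norm_add_le (T (u k) - u (k+1)) (u (k+1) - u k)
            simpa using this
        _ ≤ δ k + ‖u (k+1) - u k‖ := by
            have := hstep k hk
            rw [norm_sub_rev] at this
            linarith
    have hnull : Tendsto (fun k => δ k + ‖u (k+1) - u k‖) atTop (nhds 0) := by
      have := hδ0.add hdiff
      simpa using this
    have h2 : Tendsto (fun j => T (u (N + φ j)) - u (N + φ j)) atTop (nhds 0) := by
      rw [tendsto_zero_iff_norm_tendsto_zero]
      apply squeeze_zero (fun j => norm_nonneg _)
        (fun j => hb (N + φ j) (by omega))
      exact hnull.comp hφat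
    have := tendsto_nhds_unique h1 h2
    have := sub_eq_zero.mp this
    exact this
  -- convergence of the whole sequence
  refine ⟨a, hfix, ?_⟩
  rw [Metric.tendsto_atTop]
  intro ε hε
  -- Cauchy property of the partial sums of δ
  set P := fun j => ∑ i ∈ Finset.range j, δ i with hP
  have hcauchy : CauchySeq P := hδs.hasSum.tendsto_sum_nat.cauchySeq
  obtain ⟨K, hK⟩ := Metric.cauchySeq_iff.mp hcauchy (ε/2) (by linarith)
  -- find a good subsequence index
  have hconv' := Metric.tendsto_atTop.mp hφconv (ε/2) (by linarith)
  obtain ⟨J₀, hJ₀⟩ := hconv'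
  set j₀ := max J₀ K with hj₀
  set k₁ := N + φ j₀ with hk₁
  have hk₁K : K ≤ k₁ := by
    calc K ≤ j₀ := le_max_right J₀ K
      _ ≤ φ j₀ := hφmono.id_le j₀
      _ ≤ N + φ j₀ := Nat.le_add_left _ _
  refine ⟨k₁, ?_⟩
  intro l hl
  have hstep1 : ‖u l - a‖ ≤ ‖u k₁ - a‖ + ∑ i ∈ Finset.Ico k₁ l, δ i :=
    hfej a hfix k₁ (by omega) l hl
  have hIcosum : ∑ i ∈ Finset.Ico k₁ l, δ i = P l - P k₁ := by
    rw [hP]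
    rw [Finset.sum_Ico_eq_sub _ hl]
  have hsmall : ∑ i ∈ Finset.Ico k₁ l, δ i < ε/2 := by
    rw [hIcosum]
    have := hK l (le_trans hk₁K hl) k₁ hk₁K
    rw [Real.dist_eq] at this
    have := le_abs_self (P l - P k₁)
    linarith [hK l (le_trans hk₁K hl) k₁ hk₁K, le_abs_self (P l - P k₁),
      abs_nonneg (P l - P k₁)]
  have hnear : ‖u k₁ - a‖ < ε/2 := by
    have := hJ₀ j₀ (le_max_left _ _)
    rwa [dist_eq_norm] at this
  rw [dist_eq_norm]
  linarith

end Aux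
namespace Aux

/-- `Tmat` as a linear map. -/
def TmatL {n : ℕ} (C : Set (Fin n)) :
    EuclideanSpace ℝ (Fin n) →ₗ[ℝ] EuclideanSpace ℝ (Fin n) where
  toFun := Tmat C
  map_add' := Tmat_add C
  map_smul' := Tmat_smul C

lemma Tmat_of_supp_subset {n : ℕ} {C : Set (Fin n)} {x : EuclideanSpace ℝ (Fin n)}
    (h : ∀ i, i ∉ C → x i = 0) : Tmat C x = x := by
  ext i
  by_cases hi : i ∈ C
  · rw [Tmat_apply_mem _ hi]
  · rw [Tmat_apply_nmem _ hi, h i hi]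

set_option maxHeartbeats 1000000 in
lemma local_min_at {n m p : ℕ} (ψ : EuclideanSpace ℝ (Fin p) → ℝ)
    (hconv : ConvexOn ℝ Set.univ ψ) (hdiff : ContDiff ℝ 1 ψ)
    (B : Matrix (Fin p) (Fin m) ℝ) (D : Matrix (Fin n) (Fin m) ℝ) (hD : Dᵀ * D = 1)
    {lam γ : ℝ} (hlam : 0 < lam) (hγ : 0 < γ)
    (S : EuclideanSpace ℝ (Fin m) → EuclideanSpace ℝ (Fin m))
    (hS : ∀ x v, ψ (mulVecE B (S x)) + (lam / (2 * γ)) * ‖S x - x‖ ^ 2 ≤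
      ψ (mulVecE B v) + (lam / (2 * γ)) * ‖v - x‖ ^ 2)
    (C : Set (Fin n)) (us : EuclideanSpace ℝ (Fin n)) (vs : EuclideanSpace ℝ (Fin m))
    (hvs : vs = S (mulVecE Dᵀ us))
    (hus : us = Tmat C (mulVecE D vs))
    (hsupp : supp us = C) :
    IsLocalMin (fun q : EuclideanSpace ℝ (Fin n) × EuclideanSpace ℝ (Fin m) =>
      Fobj ψ B D lam γ q.1 q.2) (us, vs) := by
  classical
  set c := lam / (2 * γ) with hc
  have hcpos : 0 < c := by rw [hc]; positivity
  -- the reduced function h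
  set hfn := fun w : EuclideanSpace ℝ (Fin m) =>
    ψ (mulVecE B w) + c * ‖mulVecE D w - Tmat C (mulVecE D w)‖ ^ 2 with hhfn
  -- the function g
  set gfn := fun w : EuclideanSpace ℝ (Fin m) =>
    ψ (mulVecE B w) + c * ‖mulVecE D w - us‖ ^ 2 with hgfn
  have hsuppzero : ∀ i, i ∉ C → us i = 0 := by
    intro i hi
    by_contra h0
    exact hi (hsupp ▸ h0)
  have hTus : Tmat C us = us := Tmat_of_supp_subset hsuppzero
  -- g is minimized at vs
  have hDus : ∀ w : EuclideanSpace ℝ (Fin m),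
      ‖mulVecE D w - us‖ ^ 2 = ‖w - mulVecE Dᵀ us‖ ^ 2 + (‖us‖^2 - ‖mulVecE Dᵀ us‖^2) := by
    intro w
    rw [norm_sub_sq_real, norm_sub_sq_real, D_isometry hD, inner_mulVecE]
    ring
  have hgmin : ∀ w, gfn vs ≤ gfn w := by
    intro w
    show ψ (mulVecE B vs) + c * ‖mulVecE D vs - us‖ ^ 2
      ≤ ψ (mulVecE B w) + c * ‖mulVecE D w - us‖ ^ 2
    rw [hDus vs, hDus w]
    have hSw := hS (mulVecE Dᵀ us) w
    rw [← hvs] at hSw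
    nlinarith [hSw]
  -- pythagoras for g vs h
  have hpyth : ∀ w : EuclideanSpace ℝ (Fin m),
      ‖mulVecE D w - us‖ ^ 2 = ‖Tmat C (mulVecE D w) - us‖ ^ 2
        + ‖mulVecE D w - Tmat C (mulVecE D w)‖ ^ 2 := by
    intro w
    have h1 := pythagoras_Tmat C (mulVecE D w - us)
    have h2 : Tmat C (mulVecE D w - us) = Tmat C (mulVecE D w) - us := by
      rw [Tmat_sub, hTus]
    rw [h2] at h1
    have h3 : mulVecE D w - us - (Tmat C (mulVecE D w) - us)
        = mulVecE D w - Tmat C (mulVecE D w) := by abel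
    rw [h3] at h1
    exact h1
  have hTDvs : Tmat C (mulVecE D vs) = us := hus.symm
  have hgh_vs : gfn vs = hfn vs := by
    show ψ (mulVecE B vs) + c * ‖mulVecE D vs - us‖ ^ 2
      = ψ (mulVecE B vs) + c * ‖mulVecE D vs - Tmat C (mulVecE D vs)‖ ^ 2
    rw [hTDvs]
  -- convexity of h
  set M : EuclideanSpace ℝ (Fin m) →ₗ[ℝ] EuclideanSpace ℝ (Fin n) :=
    (mulVecL D) - (TmatL C).comp (mulVecL D) with hMdef
  have hM : ∀ w, M w = mulVecE D w - Tmat C (mulVecE D w) := fun w => rfl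
  have hquad : ConvexOn ℝ Set.univ (fun w : EuclideanSpace ℝ (Fin n) => c * ‖w‖^2) := by
    have h0 : ConvexOn ℝ Set.univ (fun _ : EuclideanSpace ℝ (Fin n) => (0:ℝ)) :=
      convexOn_const 0 convex_univ
    have := convexOn_quad_add h0 hcpos.le 0
    simpa using this
  have hhconv : ConvexOn ℝ Set.univ hfn := by
    have h1 := (hquad.comp_linearMap M)
    have h2 : ConvexOn ℝ Set.univ (fun w => c * ‖mulVecE D w - Tmat C (mulVecE D w)‖^2) := by
      have hcomp : (fun w : EuclideanSpace ℝ (Fin n) => c * ‖w‖^2) ∘ ⇑M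
          = fun w => c * ‖mulVecE D w - Tmat C (mulVecE D w)‖^2 := by
        funext w; rw [Function.comp_apply, hM]
      rw [hcomp] at h1
      simpa using h1
    have h3 := psiB_convex hconv B
    have := h3.add h2
    exact this
  -- h is minimized at vs
  have hhmin : ∀ w, hfn vs ≤ hfn w := by
    intro w
    by_contra hcon
    push_neg at hcon
    set δ := hfn vs - hfn w with hδdef
    have hδpos : 0 < δ := by rw [hδdef]; linarith
    set K := ‖Tmat C (mulVecE D (w - vs))‖^2 with hK
    have hK0 : 0 ≤ K := by rw [hK]; positivity
    set t := min (1/2 : ℝ) (δ / (2 * c * (K + 1))) with ht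
    have ht0 : 0 < t := by
      rw [ht]
      apply lt_min (by norm_num)
      positivity
    have ht1 : t < 1 := lt_of_le_of_lt (min_le_left _ _) (by norm_num)
    have htK : c * t * K ≤ δ / 2 := by
      have h1 : t ≤ δ / (2 * c * (K + 1)) := min_le_right _ _
      have h2 : c * t * K ≤ c * (δ / (2 * c * (K + 1))) * K :=
        mul_le_mul_of_nonneg_right (mul_le_mul_of_nonneg_left h1 hcpos.le) hK0
      have h3 : c * (δ / (2 * c * (K + 1))) * K = (δ/2) * (K / (K+1)) := by
        field_simp
      have h4 : K / (K + 1) ≤ 1 := by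
        rw [div_le_one (by linarith)]; linarith
      have h5 : (δ/2) * (K / (K+1)) ≤ δ/2 := by nlinarith [div_nonneg hK0 (by linarith : (0:ℝ) ≤ K+1)]
      linarith
    set wt := vs + t • (w - vs) with hwt
    have hwtcomb : wt = (1 - t) • vs + t • w := by rw [hwt]; module
    -- h wt ≤ h vs - t δ
    have hhwt : hfn wt ≤ hfn vs - t * δ := by
      have := hhconv.2 (Set.mem_univ vs) (Set.mem_univ w)
        (by linarith : (0:ℝ) ≤ 1 - t) ht0.le (by ring)
      simp only [smul_eq_mul] at this
      rw [hwtcomb]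
      calc hfn ((1-t) • vs + t • w) ≤ (1-t) * hfn vs + t * hfn w := this
        _ = hfn vs - t * δ := by rw [hδdef]; ring
    -- T_C D wt - us = t • (T_C D (w - vs))
    have hTwt : Tmat C (mulVecE D wt) - us = t • Tmat C (mulVecE D (w - vs)) := by
      rw [hwt, mulVecE_add, mulVecE_smul, Tmat_add, Tmat_smul, hTDvs]
      abel
    have hgwt : gfn wt = hfn wt + c * (t^2 * K) := by
      show ψ (mulVecE B wt) + c * ‖mulVecE D wt - us‖ ^ 2
        = ψ (mulVecE B wt) + c * ‖mulVecE D wt - Tmat C (mulVecE D wt)‖ ^ 2 + c * (t^2 * K)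
      rw [hpyth wt, hTwt, norm_smul, Real.norm_eq_abs, abs_of_pos ht0, mul_pow, hK]
      ring
    have hfinal : gfn wt < gfn vs := by
      rw [hgwt, hgh_vs]
      have : c * (t^2 * K) ≤ t * (δ/2) := by
        have : c * (t^2 * K) = t * (c * t * K) := by ring
        rw [this]
        exact mul_le_mul_of_nonneg_left htK ht0.le
      nlinarith [hhwt, this, ht0]
    exact absurd (hgmin wt) (not_le.mpr hfinal)
  -- now the local minimality
  set Gfn := fun q : EuclideanSpace ℝ (Fin n) × EuclideanSpace ℝ (Fin m) =>
    ψ (mulVecE B q.2) + c * ‖q.1 - mulVecE D q.2‖ ^ 2 with hGfn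
  have hGcont : Continuous Gfn := by
    have hmB : Continuous (fun w : EuclideanSpace ℝ (Fin m) => mulVecE B w) := by
      have := (mulVecL B).toContinuousLinearMap.continuous
      exact this
    have hmD : Continuous (fun w : EuclideanSpace ℝ (Fin m) => mulVecE D w) := by
      have := (mulVecL D).toContinuousLinearMap.continuous
      exact this
    apply Continuous.add
    · exact hdiff.continuous.comp (hmB.comp continuous_snd)
    · exact continuous_const.mul (((continuous_fst.sub (hmD.comp continuous_snd)).norm).pow 2)
  have hGstar : Gfn (us, vs) = hfn vs := by
    show ψ (mulVecE B vs) + c * ‖us - mulVecE D vs‖ ^ 2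
      = ψ (mulVecE B vs) + c * ‖mulVecE D vs - Tmat C (mulVecE D vs)‖ ^ 2
    rw [hTDvs, norm_sub_rev]
  -- two eventually facts
  have hev1 : ∀ᶠ q in nhds (us, vs), Gfn (us, vs) - lam < Gfn q := by
    have hca : ContinuousAt Gfn (us, vs) := hGcont.continuousAt
    exact continuousAt_const.eventually_lt hca (by simp; linarith)
  have hev2 : ∀ᶠ q in nhds (us, vs),
      ∀ i ∈ C, (q : EuclideanSpace ℝ (Fin n) × EuclideanSpace ℝ (Fin m)).1 i ≠ 0 := by
    rw [eventually_all_finite (Set.toFinite C)]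
    intro i hi
    have hui : us i ≠ 0 := by rw [← hsupp] at hi; exact hi
    rw [Metric.eventually_nhds_iff]
    refine ⟨|us i|, abs_pos.mpr hui, ?_⟩
    intro q hq
    intro h0
    have h1 : |q.1 i - us i| ≤ ‖q.1 - us‖ := by
      have := abs_coord_le_norm (q.1 - us) i
      simpa [PiLp.sub_apply] using this
    have h2 : ‖q.1 - us‖ ≤ dist q (us, vs) := by
      rw [Prod.dist_eq]
      rw [← dist_eq_norm]
      exact le_max_left _ _
    rw [h0] at h1
    simp only [zero_sub, abs_neg] at h1
    linarith [hq, h1, h2]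
  rw [IsLocalMin, IsMinFilter]
  filter_upwards [hev1, hev2] with q hG hq2
  -- main comparison
  have hCsub : C ⊆ supp q.1 := fun i hi => hq2 i hi
  have hFstar : Fobj ψ B D lam γ us vs = hfn vs + lam * (C.ncard : ℝ) := by
    have h1 : l0 us = (C.ncard : ℝ) := by rw [l0, ← hsupp]; rfl
    have h2 : ‖us - mulVecE D vs‖ = ‖mulVecE D vs - Tmat C (mulVecE D vs)‖ := by
      rw [hTDvs, norm_sub_rev]
    show ψ (mulVecE B vs) + c * ‖us - mulVecE D vs‖ ^ 2 + lam * l0 us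
      = ψ (mulVecE B vs) + c * ‖mulVecE D vs - Tmat C (mulVecE D vs)‖ ^ 2 + lam * (C.ncard : ℝ)
    rw [h1, h2]
  rcases eq_or_ssubset_of_subset hCsub with heq | hss
  · -- supp q.1 = C
    have hq1supp : ∀ i, i ∉ C → q.1 i = 0 := by
      intro i hi
      by_contra h0
      exact hi (heq ▸ (show i ∈ supp q.1 from h0))
    have hTq1 : Tmat C q.1 = q.1 := Tmat_of_supp_subset hq1supp
    have hl0q : l0 q.1 = (C.ncard : ℝ) := by rw [l0, heq]; rfl
    have hGq : hfn q.2 ≤ Gfn q := by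
      show ψ (mulVecE B q.2) + c * ‖mulVecE D q.2 - Tmat C (mulVecE D q.2)‖ ^ 2
        ≤ ψ (mulVecE B q.2) + c * ‖q.1 - mulVecE D q.2‖ ^ 2
      have h1 := pythagoras_Tmat C (q.1 - mulVecE D q.2)
      have h2 : q.1 - mulVecE D q.2 - Tmat C (q.1 - mulVecE D q.2)
          = -(mulVecE D q.2 - Tmat C (mulVecE D q.2)) := by
        rw [Tmat_sub, hTq1]; abel
      rw [h2, norm_neg] at h1
      nlinarith [sq_nonneg ‖Tmat C (q.1 - mulVecE D q.2)‖, hcpos, h1,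
        mul_le_mul_of_nonneg_left (le_of_eq h1) hcpos.le]
    have hFq : Fobj ψ B D lam γ q.1 q.2 = Gfn q + lam * (C.ncard : ℝ) := by
      show ψ (mulVecE B q.2) + c * ‖q.1 - mulVecE D q.2‖ ^ 2 + lam * l0 q.1
        = ψ (mulVecE B q.2) + c * ‖q.1 - mulVecE D q.2‖ ^ 2 + lam * (C.ncard : ℝ)
      rw [hl0q]
    rw [hFstar, hFq]
    have := hhmin q.2
    linarith [hGq]
  · -- C ⊊ supp q.1
    have hcard : (C.ncard : ℝ) + 1 ≤ (l0 q.1 : ℝ) := by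
      have h1 : C.ncard < (supp q.1).ncard := Set.ncard_lt_ncard hss (Set.toFinite _)
      have h2 : C.ncard + 1 ≤ (supp q.1).ncard := h1
      rw [l0]
      have := (Nat.cast_le (α := ℝ)).mpr h2
      push_cast at this
      exact this
    have hFq : Fobj ψ B D lam γ q.1 q.2 = Gfn q + lam * l0 q.1 := rfl
    rw [hFstar, hFq]
    have h3 : Gfn (us, vs) - lam < Gfn q := hG
    rw [hGstar] at h3
    nlinarith [hcard, hlam, h3]

end Aux

set_option maxHeartbeats 1000000 in
/-- **Theorem 1 of the paper.** The iterates `(ũ^k, ṽ^k)` produced by the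
inexact fixed-point proximity algorithm, with gradient error bounds
`‖∇H(ṽ^{k+1}; ũ^{k+1})‖₂ ≤ e^{k+1}` and `∑ e^{k+1} < ∞`, converge to a local minimizer
`(u*, v*)` of `F`. -/
theorem stmt19 (n m p : ℕ) (ψ : EuclideanSpace ℝ (Fin p) → ℝ)
    (hconv : ConvexOn ℝ Set.univ ψ) (hdiff : ContDiff ℝ 1 ψ)
    (hbdd : BddBelow (Set.range ψ))
    (B : Matrix (Fin p) (Fin m) ℝ) (D : Matrix (Fin n) (Fin m) ℝ) (hD : Dᵀ * D = 1)
    (lam γ : ℝ) (hlam : 0 < lam) (hγ : 0 < γ)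
    (S : EuclideanSpace ℝ (Fin m) → EuclideanSpace ℝ (Fin m))
    (hS : ∀ x v, ψ (mulVecE B (S x)) + (lam / (2 * γ)) * ‖S x - x‖ ^ 2 ≤
      ψ (mulVecE B v) + (lam / (2 * γ)) * ‖v - x‖ ^ 2)
    (hSuniq : ∀ x v, (∀ w, ψ (mulVecE B v) + (lam / (2 * γ)) * ‖v - x‖ ^ 2 ≤
      ψ (mulVecE B w) + (lam / (2 * γ)) * ‖w - x‖ ^ 2) → v = S x)
    (α : ℝ) (hα0 : 0 < α) (hα1 : α < 1)
    (ρ' : ℝ) (hρ'0 : 0 < ρ') (hρ'1 : ρ' < (lam / γ) * ((1 - α) / α))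
    (e : ℕ → ℝ) (he : ∀ k, 2 ≤ k → 0 < e k) (hsum : Summable fun k : ℕ => e (k + 2))
    (u : ℕ → EuclideanSpace ℝ (Fin n)) (v : ℕ → EuclideanSpace ℝ (Fin m))
    (hprox : ∀ k, 1 ≤ k →
      InProxL0 (α * γ) (u (k + 1)) ((1 - α) • u k + α • mulVecE D (v k)))
    (hineq : ∀ k, 1 ≤ k →
      Fobj ψ B D lam γ (u (k + 1)) (v (k + 1)) - Fobj ψ B D lam γ (u (k + 1)) (v k) ≤
        (ρ' / 2) * ‖u (k + 1) - u k‖ ^ 2)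
    (hgrad : ∀ k, 1 ≤ k →
      ‖gradient (fun w => Hfun ψ B D lam γ w (u (k + 1))) (v (k + 1))‖ ≤ e (k + 1))
    (hfix : ∀ C : Set (Fin n), (∃ N, ∀ k, N ≤ k → supp (u k) = C) →
      ∃ w : EuclideanSpace ℝ (Fin n),
        w = (1 - α) • Tmat C w + α • Tmat C (mulVecE D (S (mulVecE Dᵀ w)))) :
    ∃ (us : EuclideanSpace ℝ (Fin n)) (vs : EuclideanSpace ℝ (Fin m)),
      Tendsto u atTop (nhds us) ∧ Tendsto v atTop (nhds vs) ∧
      IsLocalMin (fun q : EuclideanSpace ℝ (Fin n) × EuclideanSpace ℝ (Fin m) =>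
        Fobj ψ B D lam γ q.1 q.2) (us, vs) := by

  classical
  open Aux in
  set c0 := lam / (2 * γ) with hc0
  have hc0pos : 0 < c0 := by rw [hc0]; positivity
  set cdrop := c0 * ((1 - α)/α) - ρ'/2 with hcdrop
  have hcdroppos : 0 < cdrop := by
    rw [hcdrop, hc0]
    have h1 : (lam/(2*γ)) * ((1-α)/α) = ((lam/γ) * ((1-α)/α))/2 := by ring
    linarith [hρ'1, h1]
  -- one-step decrease of F
  have hdrop : ∀ k, 1 ≤ k → Fobj ψ B D lam γ (u (k+1)) (v (k+1))
      + cdrop * ‖u (k+1) - u k‖^2 ≤ Fobj ψ B D lam γ (u k) (v k) := by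
    intro k hk
    have h1 := Aux.prox_descent ψ B D hlam hγ hα0 hα1 (u k) (u (k+1)) (v k) (hprox k hk)
    have h2 := hineq k hk
    rw [hcdrop, hc0]
    linarith [h1, h2]
  -- lower bound for F
  obtain ⟨L, hL⟩ := hbdd
  have hFlb : ∀ k, L ≤ Fobj ψ B D lam γ (u k) (v k) := by
    intro k
    have h1 : L ≤ ψ (mulVecE B (v k)) := hL (Set.mem_range_self _)
    have h2 : 0 ≤ (lam/(2*γ)) * ‖u k - mulVecE D (v k)‖^2 := by positivity
    have h3 : 0 ≤ lam * l0 (u k) := mul_nonneg hlam.le (Aux.l0_nonneg _)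
    simp only [Fobj]
    linarith
  -- step sizes tend to zero
  set dn := fun k => ‖u (k+1) - u k‖ with hdn
  have hdnsum : Summable (fun k => dn (k+1) ^ 2) := by
    apply Aux.summable_of_descent (a := fun k => Fobj ψ B D lam γ (u k) (v k))
      (c := cdrop) (L := L) hcdroppos (fun k => sq_nonneg _) hFlb
    intro k hk
    exact hdrop k hk
  have hdn0 : Tendsto dn atTop (nhds 0) := by
    have h1 : Tendsto (fun k => dn (k+1) ^ 2) atTop (nhds 0) := hdnsum.tendsto_atTop_zero
    have h2 : Tendsto (fun k => dn (k+1)) atTop (nhds 0) :=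
      Aux.tendsto_sqrt_zero (fun k => norm_nonneg _) h1
    exact (tendsto_add_atTop_iff_nat 1).mp h2
  -- threshold
  have htpos : (0:ℝ) < α * γ := by positivity
  set τ := Real.sqrt (2 * (α * γ)) with hτdef
  have hτ : 0 < τ := Real.sqrt_pos.mpr (by positivity)
  have hth : ∀ k, 2 ≤ k → ∀ i, u k i ≠ 0 → τ ≤ |u k i| := by
    intro k hk i hi
    obtain ⟨j, rfl⟩ : ∃ j, k = j + 1 := ⟨k - 1, by omega⟩
    exact Aux.prox_threshold htpos (hprox j (by omega)) hi
  -- support stabilization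
  obtain ⟨N, hN2, hsupps⟩ := Aux.supp_stab hτ hth hdn0
  set C := supp (u N) with hC
  have hsupps' : ∀ k, N ≤ k → supp (u k) = C := fun k hk => hsupps k hk
  -- fixed point of 𝒯
  obtain ⟨w, hwfix⟩ := hfix C ⟨N, hsupps'⟩
  have hwfix' : Aux.Tau C D S α w = w := by rw [Aux.Tau]; exact hwfix.symm
  -- S is nonexpansive
  have hstrongS : ∀ x w', ψ (mulVecE B (S x)) + c0 * ‖S x - x‖^2 + c0 * ‖w' - S x‖^2 ≤
      ψ (mulVecE B w') + c0 * ‖w' - x‖^2 := by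
    intro x w'
    exact Aux.strong_min (fun z => ψ (mulVecE B z)) (Aux.psiB_convex hconv B) c0 hc0pos
      x (S x) (fun z => by simpa [← hc0] using hS x z) w'
  have hSnon : ∀ x1 x2, ‖S x1 - S x2‖ ≤ ‖x1 - x2‖ :=
    Aux.nonexp_of_strong (f := fun z => ψ (mulVecE B z)) (S := S) hc0pos hstrongS
  have hTnon := fun a b => Aux.Tau_nonexp (C := C) hα0 hα1 hD hSnon a b
  -- error bound for v
  have herr : ∀ k, 2 ≤ k → ‖v k - S (mulVecE Dᵀ (u k))‖ ≤ (2*γ/lam) * e k := by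
    intro k hk
    obtain ⟨j, rfl⟩ : ∃ j, k = j + 1 := ⟨k - 1, by omega⟩
    have h1 := Aux.v_error hconv hdiff B D hlam hγ S hS (u (j+1)) (v (j+1))
    have h2 := hgrad j (by omega)
    simp only [← hc0] at h1
    have h3 : c0 * ‖v (j+1) - S (mulVecE Dᵀ (u (j+1)))‖ ≤ e (j+1) := le_trans h1 h2
    have h4 : c0 * ((2*γ/lam) * e (j+1)) = e (j+1) := by
      rw [hc0]; field_simp
    have := le_of_mul_le_mul_left (by linarith [h3, h4] :
      c0 * ‖v (j+1) - S (mulVecE Dᵀ (u (j+1)))‖ ≤ c0 * ((2*γ/lam) * e (j+1))) hc0pos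
    exact this
  -- the error sequence
  set δ : ℕ → ℝ := fun k => if k < 2 then 0 else α * ((2*γ/lam) * e k) with hδdef
  have hδ0 : ∀ k, 0 ≤ δ k := by
    intro k
    by_cases hk : k < 2
    · simp only [hδdef, if_pos hk]
      exact le_refl 0
    · simp only [hδdef, if_neg hk]
      have := he k (by omega)
      positivity
  have hδsum : Summable δ := by
    apply (summable_nat_add_iff 2).mp
    have h1 := hsum.mul_left (α * (2*γ/lam))
    apply h1.congr
    intro k
    simp only [hδdef, if_neg (by omega : ¬ (k + 2 < 2))]
    ring
  -- the inexact fixed-point step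
  have hstep : ∀ k, N ≤ k → ‖u (k+1) - Aux.Tau C D S α (u k)‖ ≤ δ k := by
    intro k hk
    have hk2 : 2 ≤ k := le_trans hN2 hk
    set y := (1 - α) • u k + α • mulVecE D (v k) with hy
    have hukeq : u (k+1) = Tmat C y := by
      ext i
      by_cases hi : i ∈ C
      · have hsupp1 : supp (u (k+1)) = C := hsupps' (k+1) (by omega)
        have hi' : u (k+1) i ≠ 0 := by
          rw [← hsupp1] at hi
          exact hi
        obtain ⟨hxy, _⟩ := Aux.prox_facts htpos (hprox k (by omega)) hi'
        rw [Aux.Tmat_apply_mem _ hi, ← hy] at *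
        rw [hxy]
      · have hsupp1 : supp (u (k+1)) = C := hsupps' (k+1) (by omega)
        have hi' : u (k+1) i = 0 := by
          by_contra h0
          exact hi (hsupp1 ▸ (show i ∈ supp (u (k+1)) from h0))
        rw [Aux.Tmat_apply_nmem _ hi, hi']
    have hTy : Tmat C y = (1-α) • Tmat C (u k) + α • Tmat C (mulVecE D (v k)) := by
      rw [hy, Aux.Tmat_add, Aux.Tmat_smul, Aux.Tmat_smul]
    have hdiffeq : u (k+1) - Aux.Tau C D S α (u k)
        = α • Tmat C (mulVecE D (v k - S (mulVecE Dᵀ (u k)))) := by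
      rw [hukeq, hTy, Aux.Tau, mulVecE_sub, Aux.Tmat_sub]
      module
    rw [hdiffeq, norm_smul, Real.norm_eq_abs, abs_of_pos hα0]
    have h1 : ‖Tmat C (mulVecE D (v k - S (mulVecE Dᵀ (u k))))‖
        ≤ ‖v k - S (mulVecE Dᵀ (u k))‖ := by
      calc ‖Tmat C (mulVecE D (v k - S (mulVecE Dᵀ (u k))))‖
          ≤ ‖mulVecE D (v k - S (mulVecE Dᵀ (u k)))‖ := Aux.norm_Tmat_le _ _
        _ = ‖v k - S (mulVecE Dᵀ (u k))‖ := Aux.D_isometry hD _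
    have h2 := herr k hk2
    simp only [hδdef, if_neg (by omega : ¬ (k < 2))]
    calc α * ‖Tmat C (mulVecE D (v k - S (mulVecE Dᵀ (u k))))‖
        ≤ α * ‖v k - S (mulVecE Dᵀ (u k))‖ := by nlinarith [h1]
      _ ≤ α * ((2*γ/lam) * e k) := by nlinarith [h2]
  -- convergence of u
  obtain ⟨us, hTus, huconv⟩ := Aux.quasi_fejer hTnon hwfix' hδ0 hδsum hstep hdn0
  -- coordinate convergence
  have hcoord : ∀ i, Tendsto (fun k => u k i) atTop (nhds (us i)) := by
    intro i
    rw [Metric.tendsto_atTop] at huconv ⊢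
    intro ε hε
    obtain ⟨K, hK⟩ := huconv ε hε
    refine ⟨K, fun k hk => ?_⟩
    have h1 := hK k hk
    rw [dist_eq_norm] at h1
    rw [Real.dist_eq]
    have h2 : |u k i - us i| ≤ ‖u k - us‖ := by
      have := Aux.abs_coord_le_norm (u k - us) i
      simpa [PiLp.sub_apply] using this
    linarith
  -- support of the limit
  have hsupp_zero : ∀ i, i ∉ C → us i = 0 := by
    intro i hi
    have h1 : Tendsto (fun k => u k i) atTop (nhds 0) := by
      refine Tendsto.congr' ?_ (tendsto_const_nhds : Tendsto (fun _ : ℕ => (0:ℝ)) atTop (nhds 0))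
      filter_upwards [eventually_ge_atTop N] with k hk
      by_contra h0
      exact hi ((hsupps' k hk) ▸ (show i ∈ supp (u k) from fun hh => h0 hh.symm))
    exact tendsto_nhds_unique (hcoord i) h1
  have hsupp_ne : ∀ i, i ∈ C → us i ≠ 0 := by
    intro i hi
    have h1 : Tendsto (fun k => |u k i|) atTop (nhds (|us i|)) :=
      (continuous_abs.tendsto _).comp (hcoord i)
    have h2 : τ ≤ |us i| := by
      apply ge_of_tendsto h1
      filter_upwards [eventually_ge_atTop N] with k hk
      have h3 : i ∈ supp (u k) := (hsupps' k hk).symm ▸ hi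
      exact hth k (by omega) i h3
    intro h0
    rw [h0] at h2
    simp at h2
    linarith
  have hsuppus : supp us = C := by
    ext i
    constructor
    · intro h1
      by_contra hi
      exact h1 (hsupp_zero i hi)
    · intro hi
      exact hsupp_ne i hi
  -- the limit pair
  set vs := S (mulVecE Dᵀ us) with hvs
  have hTmatus : Tmat C us = us := Aux.Tmat_of_supp_subset hsupp_zero
  have husTD : us = Tmat C (mulVecE D vs) := by
    have h := hTus
    rw [Aux.Tau, hTmatus] at h
    set X := Tmat C (mulVecE D vs) with hX
    have h2 : α • (us - X) = us - ((1 - α) • us + α • X) := by module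
    rw [h] at h2
    rw [sub_self] at h2
    have h3 : us - X = 0 := by
      rcases smul_eq_zero.mp h2 with h4 | h4
      · exact absurd h4 (ne_of_gt hα0)
      · exact h4
    have := sub_eq_zero.mp h3
    exact this
  -- convergence of v
  have hScont : Continuous S := by
    have : LipschitzWith 1 S := LipschitzWith.of_dist_le_mul (by
      intro a b; rw [dist_eq_norm, dist_eq_norm]; simpa using hSnon a b)
    exact this.continuous
  have hDtcont : Continuous (fun x : EuclideanSpace ℝ (Fin n) => mulVecE Dᵀ x) := by
    have := (Aux.mulVecL Dᵀ).toContinuousLinearMap.continuous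
    exact this
  have hvconv : Tendsto v atTop (nhds vs) := by
    have h1 : Tendsto (fun k => S (mulVecE Dᵀ (u k))) atTop (nhds vs) := by
      rw [hvs]
      exact (hScont.tendsto _).comp ((hDtcont.tendsto _).comp huconv)
    have he0 : Tendsto e atTop (nhds 0) :=
      (tendsto_add_atTop_iff_nat 2).mp hsum.tendsto_atTop_zero
    have h2 : Tendsto (fun k => v k - S (mulVecE Dᵀ (u k))) atTop (nhds 0) := by
      rw [tendsto_zero_iff_norm_tendsto_zero]
      apply squeeze_zero' (Filter.Eventually.of_forall (fun k => norm_nonneg _))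
      · filter_upwards [eventually_ge_atTop 2] with k hk
        exact herr k hk
      · have := he0.const_mul (2*γ/lam)
        simpa using this
    have := h2.add h1
    simpa using this
  refine ⟨us, vs, huconv, hvconv, ?_⟩
  exact Aux.local_min_at ψ hconv hdiff B D hD hlam hγ S hS C us vs rfl husTD hsuppus

end
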